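/- (Support is pairwise covered) Let H be a hypergraph on [n] and let x with x_1 ≥ … ≥ x_k > x_{k+1} = … = x_n = 0 be a maximizer of L(H, ·) over the standard simplex with minimal support size among all maximizers. Then for every pair 1 ≤ i < j ≤ k there exists an edge e ∈ E(H) with {i, j} ⊆ e. -/

import Mathlib

open Finset

def stdSimplex' (n : ℕ) : Set (Fin n → ℝ) :=
  {x | (∀ i, 0 ≤ x i) ∧ ∑ i, x i = 1}

/-- A maximizer with minimal support has its support pairwise covered by edges. -/
theorem stmt_16 (n k : ℕ) (E : Finset (Finset (Fin n)))
    (α : ℕ → ℝ) (hα : ∀ m, 0 < α m)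
    (x : Fin n → ℝ) (hx : x ∈ stdSimplex' n)
    (hsort : ∀ i j : Fin n, i ≤ j → x j ≤ x i)
    (hpos : ∀ i : Fin n, (i : ℕ) < k → 0 < x i)
    (hzero : ∀ i : Fin n, k ≤ (i : ℕ) → x i = 0)
    (hmax : ∀ y ∈ stdSimplex' n,
      (∑ e ∈ E, α e.card * ∏ v ∈ e, y v) ≤ ∑ e ∈ E, α e.card * ∏ v ∈ e, x v)
    (hminsupp : ∀ y ∈ stdSimplex' n,
      (∑ e ∈ E, α e.card * ∏ v ∈ e, y v) = (∑ e ∈ E, α e.card * ∏ v ∈ e, x v) →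
      k ≤ ((univ : Finset (Fin n)).filter (fun i => y i ≠ 0)).card) :
    ∀ i j : Fin n, i < j → (j : ℕ) < k → ∃ e ∈ E, i ∈ e ∧ j ∈ e := by
  intro i j hij hjk
  by_contra hc
  push_neg at hc
  have hij' : i ≠ j := ne_of_lt hij
  have hik : (i : ℕ) < k := lt_trans (by exact_mod_cast hij) hjk
  have hxi : 0 < x i := hpos i hik
  have hxj : 0 < x j := hpos j hjk
  set A := ∑ e ∈ E.filter (fun e => i ∈ e), α e.card * ∏ v ∈ e.erase i, x v with hA
  set B := ∑ e ∈ E.filter (fun e => j ∈ e), α e.card * ∏ v ∈ e.erase j, x v with hB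
  -- key computation
  have key : ∀ a b : ℝ,
      (∑ e ∈ E, α e.card * ∏ v ∈ e, (Function.update (Function.update x i a) j b) v)
        = (∑ e ∈ E, α e.card * ∏ v ∈ e, x v) + (a - x i) * A + (b - x j) * B := by
    intro a b
    set z := Function.update (Function.update x i a) j b with hz
    have hzi : z i = a := by
      simp [hz, Function.update_apply, hij']
    have hzj : z j = b := by simp [hz]
    have hzv : ∀ v, v ≠ i → v ≠ j → z v = x v := by
      intro v hvi hvj
      simp [hz, Function.update_apply, hvi, hvj]
    have hterm : ∀ e ∈ E, α e.card * ∏ v ∈ e, z v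
        = α e.card * ∏ v ∈ e, x v
          + (if i ∈ e then α e.card * ((a - x i) * ∏ v ∈ e.erase i, x v) else 0)
          + (if j ∈ e then α e.card * ((b - x j) * ∏ v ∈ e.erase j, x v) else 0) := by
      intro e he
      by_cases hie : i ∈ e
      · have hje : j ∉ e := hc e he hie
        have hprodz : ∏ v ∈ e.erase i, z v = ∏ v ∈ e.erase i, x v := by
          refine Finset.prod_congr rfl fun v hv => ?_
          exact hzv v (Finset.ne_of_mem_erase hv)
            (fun h => hje (h ▸ Finset.mem_of_mem_erase hv))
        have h1 : ∏ v ∈ e, z v = a * ∏ v ∈ e.erase i, x v := by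
          rw [← Finset.mul_prod_erase e z hie, hzi, hprodz]
        have h2 : ∏ v ∈ e, x v = x i * ∏ v ∈ e.erase i, x v :=
          (Finset.mul_prod_erase e x hie).symm
        simp only [hie, hje, if_true, if_false, h1, h2]
        ring
      · by_cases hje : j ∈ e
        · have hprodz : ∏ v ∈ e.erase j, z v = ∏ v ∈ e.erase j, x v := by
            refine Finset.prod_congr rfl fun v hv => ?_
            exact hzv v (fun h => hie (h ▸ Finset.mem_of_mem_erase hv))
              (Finset.ne_of_mem_erase hv)
          have h1 : ∏ v ∈ e, z v = b * ∏ v ∈ e.erase j, x v := by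
            rw [← Finset.mul_prod_erase e z hje, hzj, hprodz]
          have h2 : ∏ v ∈ e, x v = x j * ∏ v ∈ e.erase j, x v :=
            (Finset.mul_prod_erase e x hje).symm
          simp only [hie, hje, if_true, if_false, h1, h2]
          ring
        · have : ∏ v ∈ e, z v = ∏ v ∈ e, x v := by
            refine Finset.prod_congr rfl fun v hv => ?_
            exact hzv v (fun h => hie (h ▸ hv)) (fun h => hje (h ▸ hv))
          simp [hie, hje, this]
    calc (∑ e ∈ E, α e.card * ∏ v ∈ e, z v)
        = ∑ e ∈ E, (α e.card * ∏ v ∈ e, x v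
          + (if i ∈ e then α e.card * ((a - x i) * ∏ v ∈ e.erase i, x v) else 0)
          + (if j ∈ e then α e.card * ((b - x j) * ∏ v ∈ e.erase j, x v) else 0)) :=
          Finset.sum_congr rfl hterm
      _ = (∑ e ∈ E, α e.card * ∏ v ∈ e, x v) + (a - x i) * A + (b - x j) * B := by
          rw [Finset.sum_add_distrib, Finset.sum_add_distrib,
            ← Finset.sum_filter, ← Finset.sum_filter, hA, hB,
            Finset.mul_sum, Finset.mul_sum]
          congr 1
          · congr 1
            refine Finset.sum_congr rfl fun e _ => by ring
          · refine Finset.sum_congr rfl fun e _ => by ring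
  -- membership in simplex
  have hmem : ∀ a b : ℝ, 0 ≤ a → 0 ≤ b → a + b = x i + x j →
      (Function.update (Function.update x i a) j b) ∈ stdSimplex' n := by
    intro a b ha hb hab
    constructor
    · intro v
      rcases eq_or_ne v j with rfl | hvj
      · simpa using hb
      rcases eq_or_ne v i with rfl | hvi
      · simp only [Function.update_apply, hvj, if_false]
        simpa using ha
      · simp only [Function.update_apply, hvj, hvi, if_false]
        exact hx.1 v
    · have hj : j ∈ (univ : Finset (Fin n)) := Finset.mem_univ j
      have hi : i ∈ (univ : Finset (Fin n)).erase j := by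
        simp [hij']
      rw [← Finset.add_sum_erase _ _ hj, ← Finset.add_sum_erase _ _ hi]
      have e1 : Function.update (Function.update x i a) j b j = b := by simp
      have e2 : Function.update (Function.update x i a) j b i = a := by
        simp [Function.update_apply, hij']
      have e3 : ∀ v ∈ ((univ : Finset (Fin n)).erase j).erase i,
          Function.update (Function.update x i a) j b v = x v := by
        intro v hv
        have hvi := Finset.ne_of_mem_erase hv
        have hvj := Finset.ne_of_mem_erase (Finset.mem_of_mem_erase hv)
        simp [Function.update_apply, hvi, hvj]
      rw [e1, e2, Finset.sum_congr rfl e3]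
      have hx2 : ∑ v, x v = x j + (x i + ∑ v ∈ ((univ : Finset (Fin n)).erase j).erase i, x v) := by
        rw [← Finset.add_sum_erase _ _ hj, ← Finset.add_sum_erase _ _ hi]
      have := hx.2
      rw [hx2] at this
      linarith
  -- the two perturbations
  have hz1 := hmax _ (hmem (x i + x j) 0 (by linarith) le_rfl (by ring))
  have hz2 := hmax _ (hmem 0 (x i + x j) le_rfl (by linarith) (by ring))
  rw [key] at hz1 hz2
  have hAB : A = B := by nlinarith
  have heq : (∑ e ∈ E, α e.card * ∏ v ∈ e,
      (Function.update (Function.update x i (x i + x j)) j 0) v)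
      = ∑ e ∈ E, α e.card * ∏ v ∈ e, x v := by
    rw [key]; rw [hAB]; ring
  have hk := hminsupp _ (hmem (x i + x j) 0 (by linarith) le_rfl (by ring)) heq
  -- support bound
  set z := Function.update (Function.update x i (x i + x j)) j 0 with hzdef
  have hsub : (univ : Finset (Fin n)).filter (fun v => z v ≠ 0)
      ⊆ ((univ : Finset (Fin n)).filter (fun v : Fin n => (v : ℕ) < k)).erase j := by
    intro v hv
    rw [Finset.mem_filter] at hv
    have hvj : v ≠ j := by
      rintro rfl
      exact hv.2 (by simp [hzdef])
    rcases eq_or_ne v i with rfl | hvi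
    · exact Finset.mem_erase.2 ⟨hvj, Finset.mem_filter.2 ⟨Finset.mem_univ _, hik⟩⟩
    · have hzx : z v = x v := by simp [hzdef, Function.update_apply, hvi, hvj]
      have : (v : ℕ) < k := by
        by_contra h
        exact hv.2 (by rw [hzx]; exact hzero v (le_of_not_gt h))
      exact Finset.mem_erase.2 ⟨hvj, Finset.mem_filter.2 ⟨Finset.mem_univ _, this⟩⟩
  have hcard1 : ((univ : Finset (Fin n)).filter (fun v : Fin n => (v : ℕ) < k)).card ≤ k := by
    have : ((univ : Finset (Fin n)).filter (fun v : Fin n => (v : ℕ) < k)).card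
        ≤ (Finset.range k).card := by
      refine Finset.card_le_card_of_injOn (fun v => (v : ℕ)) ?_ ?_
      · intro v hv
        rw [Finset.mem_coe, Finset.mem_filter] at hv
        exact Finset.mem_range.2 hv.2
      · intro a _ b _ hab
        exact Fin.val_injective hab
    simpa using this
  have hjmem : j ∈ (univ : Finset (Fin n)).filter (fun v : Fin n => (v : ℕ) < k) :=
    Finset.mem_filter.2 ⟨Finset.mem_univ _, hjk⟩
  have hcard2 := Finset.card_le_card hsub
  rw [Finset.card_erase_of_mem hjmem] at hcard2
  omega
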